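/- Let $d$ be a positive integer and $\mathbf{x},\mathbf{y} \in \{0,1\}^d$ fixed. Pick $\mathbf{x}',\mathbf{y}'$ uniformly from $\{0,1\}^d$ and form $A = (\mathbf{x}+\mathbf{x}', \mathbf{x}', \mathbf{x}+\mathbf{x}', \mathbf{x}')$ and $B = (\mathbf{y}+\mathbf{y}', \mathbf{y}', \mathbf{y}', \mathbf{y}+\mathbf{y}')$ in $\{0,1\}^{4d}$ (additions mod 2). Let $d_1,d_2,d_3,d_4$ count the indices $j \in [4d]$ where $(A_j,B_j)$ equals $(0,0),(0,1),(1,0),(1,1)$ respectively. Then for any $s$ with $0 < s < 1/(24d)$, $\mathbb{E}\left[e^{s\sum_{i=1}^4 (d_i-d)^2}\right] \leq \left(\frac{1}{1-24ds}\right)^2$. -/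

import Mathlib

open Finset MeasureTheory Real

noncomputable def e2 (z : ZMod 2) : ℝ := if z = 0 then 1 else -1

noncomputable def rr (w w' : ZMod 2) : ℝ := if w = 0 then e2 w' else 0

lemma e2_sq (z : ZMod 2) : e2 z ^ 2 = 1 := by
  rcases ((by decide : ∀ w : ZMod 2, w = 0 ∨ w = 1) z) with h | h <;> simp [e2, h]

lemma integrable_gauss_lin (b : ℝ) :
    Integrable (fun u : ℝ => Real.exp (-u^2 + b*u)) := by
  have h : ∀ u : ℝ, Real.exp (-u^2 + b*u)
      = Real.exp (b^2/4) * Real.exp (-((u - b/2)^2)) := by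
    intro u; rw [← Real.exp_add]; congr 1; ring
  simp_rw [h]
  have h1 : Integrable (fun u : ℝ => Real.exp (-(u^2))) := by
    simpa using integrable_exp_neg_mul_sq (one_pos (α := ℝ))
  exact (h1.comp_sub_right (b/2)).const_mul _

lemma gauss_lin (b : ℝ) :
    (∫ u : ℝ, Real.exp (-u^2 + b*u)) = Real.exp (b^2/4) * Real.sqrt π := by
  have h : ∀ u : ℝ, Real.exp (-u^2 + b*u)
      = Real.exp (b^2/4) * Real.exp (-((u - b/2)^2)) := by
    intro u; rw [← Real.exp_add]; congr 1; ring
  simp_rw [h]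
  rw [integral_const_mul _ _]
  congr 1
  have h2 := integral_sub_right_eq_self (μ := volume)
    (fun u : ℝ => Real.exp (-(u^2))) (b/2)
  rw [h2]
  have := integral_gaussian 1
  simpa using this

lemma mgf_bound (d : ℕ) (t : ℝ) (ht : 0 ≤ t) (htd : 2 * d * t < 1) (c : Fin d → ℝ)
    (hc : ∀ j, c j ^ 2 ≤ 1) :
    ∑ z : Fin d → ZMod 2, Real.exp (t * (∑ j, c j * e2 (z j)) ^ 2)
      ≤ 2 ^ d * (Real.sqrt (1 - 2 * d * t))⁻¹ := by
  set r := Real.sqrt t with hr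
  have hr2 : r ^ 2 = t := Real.sq_sqrt ht
  have hπ : (0:ℝ) < Real.sqrt π := Real.sqrt_pos.mpr Real.pi_pos
  -- identity : exp (t * S^2) = (√π)⁻¹ * ∫ u, exp (-u^2 + (2*r*S)*u)
  have hid : ∀ S : ℝ, Real.exp (t * S ^ 2)
      = (Real.sqrt π)⁻¹ * ∫ u : ℝ, Real.exp (-u^2 + (2*r*S)*u) := by
    intro S
    rw [gauss_lin]
    rw [show (2*r*S)^2/4 = t * S^2 by rw [← hr2]; ring]
    field_simp
  simp_rw [hid]
  rw [← Finset.mul_sum]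
  have hswap : ∑ z : Fin d → ZMod 2, ∫ u : ℝ, Real.exp (-u^2 + (2*r*(∑ j, c j * e2 (z j)))*u)
      = ∫ u : ℝ, ∑ z : Fin d → ZMod 2, Real.exp (-u^2 + (2*r*(∑ j, c j * e2 (z j)))*u) := by
    rw [integral_finset_sum]
    intro z _
    exact integrable_gauss_lin _
  rw [hswap]
  have hA : (0:ℝ) < 1 - 2*d*t := by linarith
  -- pointwise bound
  have hpt : ∀ u : ℝ, ∑ z : Fin d → ZMod 2, Real.exp (-u^2 + (2*r*(∑ j, c j * e2 (z j)))*u)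
      ≤ 2 ^ d * Real.exp (-(1 - 2*d*t) * u^2) := by
    intro u
    have hfac : ∀ z : Fin d → ZMod 2,
        Real.exp (-u^2 + (2*r*(∑ j, c j * e2 (z j)))*u)
        = Real.exp (-u^2) * ∏ j, Real.exp (2*r*u * (c j * e2 (z j))) := by
      intro z
      rw [← Real.exp_sum, ← Real.exp_add]
      congr 1
      rw [Finset.mul_sum, Finset.sum_mul]
      congr 1
      exact Finset.sum_congr rfl (fun j _ => by ring)
    simp_rw [hfac]
    rw [← Finset.mul_sum]
    have hprod : ∑ z : Fin d → ZMod 2, ∏ j, Real.exp (2*r*u * (c j * e2 (z j)))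
        = ∏ j, ∑ v : ZMod 2, Real.exp (2*r*u * (c j * e2 v)) := by
      rw [Finset.prod_univ_sum]
      rw [Fintype.piFinset_univ]
    rw [hprod]
    have hfactor : ∀ j, ∑ v : ZMod 2, Real.exp (2*r*u * (c j * e2 v))
        ≤ 2 * Real.exp (2 * t * u^2) := by
      intro j
      have huniv : (Finset.univ : Finset (ZMod 2)) = {0, 1} := by decide
      rw [huniv, Finset.sum_insert (by decide), Finset.sum_singleton]
      have h0 : e2 0 = 1 := by simp [e2]
      have h1 : e2 1 = -1 := by simp [e2]
      rw [h0, h1]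
      have hcosh : Real.exp (2*r*u*(c j * 1)) + Real.exp (2*r*u*(c j * -1))
          = 2 * Real.cosh (2*r*u*c j) := by
        rw [Real.cosh_eq]; ring_nf
      rw [hcosh]
      have hb := Real.cosh_le_exp_half_sq (2*r*u*c j)
      have hle : (2*r*u*c j)^2/2 ≤ 2 * t * u^2 := by
        have h1 : (2*r*u*c j)^2/2 = 2 * t * u^2 * (c j)^2 := by
          rw [← hr2]; ring
        rw [h1]
        have h2 : 2 * t * u^2 * (c j)^2 ≤ 2 * t * u^2 * 1 := by
          apply mul_le_mul_of_nonneg_left (hc j) (by positivity)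
        linarith
      calc 2 * Real.cosh (2*r*u*c j) ≤ 2 * Real.exp ((2*r*u*c j)^2/2) := by linarith
        _ ≤ 2 * Real.exp (2*t*u^2) := by
            have := Real.exp_le_exp.mpr hle; linarith
    calc Real.exp (-u^2) * ∏ j, ∑ v : ZMod 2, Real.exp (2*r*u * (c j * e2 v))
        ≤ Real.exp (-u^2) * ∏ j : Fin d, (2 * Real.exp (2*t*u^2)) := by
          apply mul_le_mul_of_nonneg_left _ (Real.exp_nonneg _)
          apply Finset.prod_le_prod
          · intro j _
            apply Finset.sum_nonneg
            intro v _
            exact Real.exp_nonneg _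
          · intro j _; exact hfactor j
      _ = 2 ^ d * Real.exp (-(1-2*d*t)*u^2) := by
          rw [Finset.prod_const, Finset.card_univ, Fintype.card_fin, mul_pow,
            ← Real.exp_nat_mul]
          rw [show (-(1-2*(d:ℝ)*t)*u^2) = -u^2 + (d:ℝ)*(2*t*u^2) by ring, Real.exp_add]
          ring
  -- integrate the bound
  have hintR : Integrable (fun u : ℝ => 2 ^ d * Real.exp (-(1-2*d*t)*u^2)) :=
    (integrable_exp_neg_mul_sq hA).const_mul _
  have hintL : Integrable (fun u : ℝ =>
      ∑ z : Fin d → ZMod 2, Real.exp (-u^2 + (2*r*(∑ j, c j * e2 (z j)))*u)) := by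
    apply integrable_finset_sum
    intro z _
    exact integrable_gauss_lin _
  have hmono := integral_mono hintL hintR hpt
  have hI : (∫ u : ℝ, 2 ^ d * Real.exp (-(1-2*d*t)*u^2))
      = 2 ^ d * Real.sqrt (π / (1-2*d*t)) := by
    rw [integral_const_mul]
    congr 1
    have := integral_gaussian (1-2*d*t)
    simpa using this
  rw [hI] at hmono
  calc (Real.sqrt π)⁻¹ * ∫ u : ℝ, ∑ z : Fin d → ZMod 2,
        Real.exp (-u^2 + (2*r*(∑ j, c j * e2 (z j)))*u)
      ≤ (Real.sqrt π)⁻¹ * (2 ^ d * Real.sqrt (π / (1-2*d*t))) := by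
        apply mul_le_mul_of_nonneg_left hmono (by positivity)
    _ = 2 ^ d * (Real.sqrt (1 - 2*d*t))⁻¹ := by
        rw [Real.sqrt_div Real.pi_pos.le]
        have hπ' : Real.sqrt π ≠ 0 := ne_of_gt hπ
        field_simp

lemma cell (p q u v a b : ZMod 2) :
    ((if p + u = a ∧ q + v = b then (1:ℝ) else 0) + (if u = a ∧ v = b then 1 else 0)
      + (if p + u = a ∧ v = b then 1 else 0) + (if u = a ∧ q + v = b then 1 else 0))
    = (1 + e2 a * rr p u) * (1 + e2 b * rr q v) := by
  have hz := (by decide : ∀ w : ZMod 2, w = 0 ∨ w = 1)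
  rcases hz p with rfl | rfl <;> rcases hz q with rfl | rfl <;>
    rcases hz u with rfl | rfl <;> rcases hz v with rfl | rfl <;>
    rcases hz a with rfl | rfl <;> rcases hz b with rfl | rfl <;>
    simp (config := { decide := true }) [e2, rr] <;> norm_num

lemma count_eq (d : ℕ) (x y x' y' : Fin d → ZMod 2) (a b : ZMod 2) :
    ((Finset.univ.filter (fun kj : Fin 4 × Fin d =>
        (if kj.1 = 1 ∨ kj.1 = 3 then x' kj.2 else x kj.2 + x' kj.2) = a ∧
        (if kj.1 = 1 ∨ kj.1 = 2 then y' kj.2 else y kj.2 + y' kj.2) = b)).card : ℝ)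
    = ∑ j : Fin d, (1 + e2 a * rr (x j) (x' j)) * (1 + e2 b * rr (y j) (y' j)) := by
  rw [Finset.card_filter]
  push_cast
  rw [Fintype.sum_prod_type_right]
  apply Finset.sum_congr rfl
  intro j _
  rw [Fin.sum_univ_four]
  simp only [show ¬((0:Fin 4) = 1 ∨ (0:Fin 4) = 3) by decide,
    show ((1:Fin 4) = 1 ∨ (1:Fin 4) = 3) by decide,
    show ¬((2:Fin 4) = 1 ∨ (2:Fin 4) = 3) by decide,
    show ((3:Fin 4) = 1 ∨ (3:Fin 4) = 3) by decide,
    show ¬((0:Fin 4) = 1 ∨ (0:Fin 4) = 2) by decide,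
    show ((1:Fin 4) = 1 ∨ (1:Fin 4) = 2) by decide,
    show ((2:Fin 4) = 1 ∨ (2:Fin 4) = 2) by decide,
    show ¬((3:Fin 4) = 1 ∨ (3:Fin 4) = 2) by decide,
    true_or, or_true, if_true, if_false]
  rw [← cell (x j) (y j) (x' j) (y' j) a b]

lemma total_eq (d : ℕ) (x y x' y' : Fin d → ZMod 2) :
    ∑ a : ZMod 2, ∑ b : ZMod 2,
      ((∑ j : Fin d, (1 + e2 a * rr (x j) (x' j)) * (1 + e2 b * rr (y j) (y' j))) - (d:ℝ))^2
    = 4 * ((∑ j, rr (y j) (y' j))^2 + (∑ j, rr (x j) (x' j))^2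
        + (∑ j, rr (x j) (x' j) * rr (y j) (y' j))^2) := by
  have hN : ∀ a b : ZMod 2,
      (∑ j : Fin d, (1 + e2 a * rr (x j) (x' j)) * (1 + e2 b * rr (y j) (y' j)))
      = (d:ℝ) + e2 a * (∑ j, rr (x j) (x' j)) + e2 b * (∑ j, rr (y j) (y' j))
        + (e2 a * e2 b) * (∑ j, rr (x j) (x' j) * rr (y j) (y' j)) := by
    intro a b
    have h : ∀ j : Fin d, (1 + e2 a * rr (x j) (x' j)) * (1 + e2 b * rr (y j) (y' j))
        = 1 + e2 a * rr (x j) (x' j) + e2 b * rr (y j) (y' j)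
          + (e2 a * e2 b) * (rr (x j) (x' j) * rr (y j) (y' j)) := by
      intro j; ring
    simp_rw [h, Finset.sum_add_distrib, ← Finset.mul_sum, Finset.sum_const, card_univ,
      Fintype.card_fin, nsmul_eq_mul, mul_one]
  simp_rw [hN]
  have huniv : (Finset.univ : Finset (ZMod 2)) = {0, 1} := by decide
  rw [huniv]
  rw [Finset.sum_insert (by decide), Finset.sum_singleton,
    Finset.sum_insert (by decide), Finset.sum_singleton,
    Finset.sum_insert (by decide), Finset.sum_singleton]
  have h0 : e2 0 = 1 := by simp [e2]
  have h1 : e2 1 = -1 := by simp [e2]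
  rw [h0, h1]
  ring

lemma rr_eq (w w' : ZMod 2) : rr w w' = (if w = 0 then (1:ℝ) else 0) * e2 w' := by
  by_cases h : w = 0 <;> simp [rr, h]

lemma rr_sq_le (w w' : ZMod 2) : rr w w' ^ 2 ≤ 1 := by
  rcases ((by decide : ∀ z : ZMod 2, z = 0 ∨ z = 1) w) with h | h <;>
    rcases ((by decide : ∀ z : ZMod 2, z = 0 ∨ z = 1) w') with h' | h' <;>
    norm_num [rr, e2, h, h']

theorem stmt13 (d : ℕ) (hd : 0 < d) (x y : Fin d → ZMod 2) (s : ℝ) (hs0 : 0 < s)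
    (hs : s < 1 / (24 * d)) :
    (1 / ((2 : ℝ) ^ d * 2 ^ d)) *
        ∑ x' : Fin d → ZMod 2, ∑ y' : Fin d → ZMod 2,
          Real.exp (s * ∑ a : ZMod 2, ∑ b : ZMod 2,
            (((Finset.univ.filter (fun kj : Fin 4 × Fin d =>
                  (if kj.1 = 1 ∨ kj.1 = 3 then x' kj.2 else x kj.2 + x' kj.2) = a ∧
                  (if kj.1 = 1 ∨ kj.1 = 2 then y' kj.2 else y kj.2 + y' kj.2) = b)).card : ℝ)
              - (d : ℝ)) ^ 2)
      ≤ (1 / (1 - 24 * (d : ℝ) * s)) ^ 2 := by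
  have hd' : (0:ℝ) < d := by exact_mod_cast hd
  have h24pos : (0:ℝ) < 24 * d := by positivity
  rw [lt_div_iff₀ h24pos] at hs
  have hds : 24 * (d:ℝ) * s < 1 := by nlinarith
  have hR : (0:ℝ) < 1 - 24 * (d:ℝ) * s := by linarith
  have h16 : 2 * (d:ℝ) * (8*s) < 1 := by nlinarith
  have h8 : 2 * (d:ℝ) * (4*s) < 1 := by nlinarith
  have hR16 : (0:ℝ) < 1 - 2*(d:ℝ)*(8*s) := by linarith
  have hR8 : (0:ℝ) < 1 - 2*(d:ℝ)*(4*s) := by linarith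
  have hexp2 : ∀ a : ℝ, Real.exp a ^ 2 = Real.exp (2*a) := by
    intro a; rw [sq, ← Real.exp_add]; ring_nf
  -- rewrite the summand
  have hexp : ∀ x' y' : Fin d → ZMod 2,
      Real.exp (s * ∑ a : ZMod 2, ∑ b : ZMod 2,
        (((Finset.univ.filter (fun kj : Fin 4 × Fin d =>
              (if kj.1 = 1 ∨ kj.1 = 3 then x' kj.2 else x kj.2 + x' kj.2) = a ∧
              (if kj.1 = 1 ∨ kj.1 = 2 then y' kj.2 else y kj.2 + y' kj.2) = b)).card : ℝ)
          - (d : ℝ)) ^ 2)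
      = Real.exp ((4*s)*(∑ j, rr (x j) (x' j))^2) *
          (Real.exp ((4*s)*(∑ j, rr (y j) (y' j))^2) *
           Real.exp ((4*s)*(∑ j, rr (x j) (x' j) * rr (y j) (y' j))^2)) := by
    intro x' y'
    simp_rw [count_eq d x y x' y']
    rw [total_eq d x y x' y']
    rw [← Real.exp_add, ← Real.exp_add]
    congr 1; ring
  simp_rw [hexp]
  -- the three mgf bounds
  have hA : ∑ y' : Fin d → ZMod 2, Real.exp ((8*s) * (∑ j, rr (y j) (y' j))^2)
      ≤ 2 ^ d * (Real.sqrt (1 - 2*d*(8*s)))⁻¹ := by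
    have h := mgf_bound d (8*s) (by positivity) h16
      (fun j => if y j = 0 then 1 else 0)
      (fun j => by by_cases h : y j = 0 <;> norm_num [h])
    simp_rw [← rr_eq] at h
    exact h
  have hB : ∑ x' : Fin d → ZMod 2, Real.exp ((4*s) * (∑ j, rr (x j) (x' j))^2)
      ≤ 2 ^ d * (Real.sqrt (1 - 2*d*(4*s)))⁻¹ := by
    have h := mgf_bound d (4*s) (by positivity) h8
      (fun j => if x j = 0 then 1 else 0)
      (fun j => by by_cases h : x j = 0 <;> norm_num [h])
    simp_rw [← rr_eq] at h
    exact h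
  have hC : ∀ x' : Fin d → ZMod 2,
      ∑ y' : Fin d → ZMod 2, Real.exp ((8*s) * (∑ j, rr (x j) (x' j) * rr (y j) (y' j))^2)
      ≤ 2 ^ d * (Real.sqrt (1 - 2*d*(8*s)))⁻¹ := by
    intro x'
    have h := mgf_bound d (8*s) (by positivity) h16
      (fun j => rr (x j) (x' j) * (if y j = 0 then 1 else 0))
      (fun j => by
        rw [mul_pow]
        have h1 := rr_sq_le (x j) (x' j)
        have h2 : ((if y j = 0 then (1:ℝ) else 0))^2 ≤ 1 := by
          by_cases h : y j = 0 <;> norm_num [h]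
        nlinarith [sq_nonneg (rr (x j) (x' j)), sq_nonneg ((if y j = 0 then (1:ℝ) else 0))])
    have harg : ∀ z : Fin d → ZMod 2, ∀ j,
        rr (x j) (x' j) * (if y j = 0 then (1:ℝ) else 0) * e2 (z j)
        = rr (x j) (x' j) * rr (y j) (z j) := by
      intro z j; rw [mul_assoc, ← rr_eq]
    simp_rw [harg] at h
    exact h
  -- Cauchy-Schwarz in y'
  set M : ℝ := 2 ^ d * (Real.sqrt (1 - 2*d*(8*s)))⁻¹ with hM
  have hMnn : 0 ≤ M := by positivity
  have hCS : ∀ x' : Fin d → ZMod 2,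
      ∑ y' : Fin d → ZMod 2, Real.exp ((4*s)*(∑ j, rr (y j) (y' j))^2) *
        Real.exp ((4*s)*(∑ j, rr (x j) (x' j) * rr (y j) (y' j))^2) ≤ M := by
    intro x'
    set S := ∑ y' : Fin d → ZMod 2, Real.exp ((4*s)*(∑ j, rr (y j) (y' j))^2) *
        Real.exp ((4*s)*(∑ j, rr (x j) (x' j) * rr (y j) (y' j))^2) with hS
    have hSnn : 0 ≤ S := Finset.sum_nonneg fun _ _ => by positivity
    have hsq := Finset.sum_mul_sq_le_sq_mul_sq Finset.univ
      (fun y' : Fin d → ZMod 2 => Real.exp ((4*s)*(∑ j, rr (y j) (y' j))^2))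
      (fun y' : Fin d → ZMod 2 =>
        Real.exp ((4*s)*(∑ j, rr (x j) (x' j) * rr (y j) (y' j))^2))
    simp_rw [hexp2] at hsq
    have e1 : ∀ X : ℝ, 2*((4*s)*X) = (8*s)*X := by intro X; ring
    simp_rw [e1] at hsq
    have hP : ∑ y' : Fin d → ZMod 2, Real.exp ((8*s) * (∑ j, rr (y j) (y' j))^2) ≥ 0 :=
      Finset.sum_nonneg fun _ _ => (Real.exp_nonneg _)
    have hQ : ∑ y' : Fin d → ZMod 2,
        Real.exp ((8*s) * (∑ j, rr (x j) (x' j) * rr (y j) (y' j))^2) ≥ 0 :=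
      Finset.sum_nonneg fun _ _ => (Real.exp_nonneg _)
    have hSM : S^2 ≤ M * M := by
      calc S^2 ≤ _ := hsq
        _ ≤ M * M := by
            apply mul_le_mul hA (hC x') hQ hMnn
    calc S = Real.sqrt (S^2) := by rw [Real.sqrt_sq hSnn]
      _ ≤ Real.sqrt (M*M) := Real.sqrt_le_sqrt hSM
      _ = M := by rw [← sq, Real.sqrt_sq hMnn]
  -- assemble
  have hrearr : ∀ x' : Fin d → ZMod 2,
      ∑ y' : Fin d → ZMod 2, Real.exp ((4*s)*(∑ j, rr (x j) (x' j))^2) *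
        (Real.exp ((4*s)*(∑ j, rr (y j) (y' j))^2) *
         Real.exp ((4*s)*(∑ j, rr (x j) (x' j) * rr (y j) (y' j))^2))
      = Real.exp ((4*s)*(∑ j, rr (x j) (x' j))^2) *
        ∑ y' : Fin d → ZMod 2, Real.exp ((4*s)*(∑ j, rr (y j) (y' j))^2) *
         Real.exp ((4*s)*(∑ j, rr (x j) (x' j) * rr (y j) (y' j))^2) := by
    intro x'; rw [Finset.mul_sum]
  simp_rw [hrearr]
  have hout : ∑ x' : Fin d → ZMod 2, Real.exp ((4*s)*(∑ j, rr (x j) (x' j))^2) *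
        (∑ y' : Fin d → ZMod 2, Real.exp ((4*s)*(∑ j, rr (y j) (y' j))^2) *
         Real.exp ((4*s)*(∑ j, rr (x j) (x' j) * rr (y j) (y' j))^2))
      ≤ (2 ^ d * (Real.sqrt (1 - 2*d*(4*s)))⁻¹) * M := by
    calc ∑ x' : Fin d → ZMod 2, Real.exp ((4*s)*(∑ j, rr (x j) (x' j))^2) *
        (∑ y' : Fin d → ZMod 2, Real.exp ((4*s)*(∑ j, rr (y j) (y' j))^2) *
         Real.exp ((4*s)*(∑ j, rr (x j) (x' j) * rr (y j) (y' j))^2))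
        ≤ ∑ x' : Fin d → ZMod 2, Real.exp ((4*s)*(∑ j, rr (x j) (x' j))^2) * M := by
          apply Finset.sum_le_sum
          intro x' _
          exact mul_le_mul_of_nonneg_left (hCS x') (Real.exp_nonneg _)
      _ = (∑ x' : Fin d → ZMod 2, Real.exp ((4*s)*(∑ j, rr (x j) (x' j))^2)) * M := by
          rw [← Finset.sum_mul]
      _ ≤ (2 ^ d * (Real.sqrt (1 - 2*d*(4*s)))⁻¹) * M :=
          mul_le_mul_of_nonneg_right hB hMnn
  have h2d : (0:ℝ) < (2:ℝ)^d * 2^d := by positivity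
  calc (1 / ((2 : ℝ) ^ d * 2 ^ d)) * ∑ x' : Fin d → ZMod 2,
        Real.exp ((4*s)*(∑ j, rr (x j) (x' j))^2) *
        (∑ y' : Fin d → ZMod 2, Real.exp ((4*s)*(∑ j, rr (y j) (y' j))^2) *
         Real.exp ((4*s)*(∑ j, rr (x j) (x' j) * rr (y j) (y' j))^2))
      ≤ (1 / ((2 : ℝ) ^ d * 2 ^ d)) * ((2 ^ d * (Real.sqrt (1 - 2*d*(4*s)))⁻¹) * M) := by
        apply mul_le_mul_of_nonneg_left hout (by positivity)
    _ = (Real.sqrt (1 - 2*d*(4*s)))⁻¹ * (Real.sqrt (1 - 2*d*(8*s)))⁻¹ := by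
        rw [hM]; field_simp
    _ ≤ (Real.sqrt (1 - 24*d*s))⁻¹ * (Real.sqrt (1 - 24*d*s))⁻¹ := by
        have hs4 : Real.sqrt (1 - 24*d*s) ≤ Real.sqrt (1 - 2*d*(4*s)) :=
          Real.sqrt_le_sqrt (by nlinarith)
        have hs8 : Real.sqrt (1 - 24*d*s) ≤ Real.sqrt (1 - 2*d*(8*s)) :=
          Real.sqrt_le_sqrt (by nlinarith)
        have hsp : 0 < Real.sqrt (1 - 24*d*s) := Real.sqrt_pos.mpr hR
        have i1 : (Real.sqrt (1 - 2*d*(4*s)))⁻¹ ≤ (Real.sqrt (1 - 24*d*s))⁻¹ :=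
          inv_anti₀ hsp hs4
        have i2 : (Real.sqrt (1 - 2*d*(8*s)))⁻¹ ≤ (Real.sqrt (1 - 24*d*s))⁻¹ :=
          inv_anti₀ hsp hs8
        apply mul_le_mul i1 i2 (by positivity) (by positivity)
    _ = (1 - 24*(d:ℝ)*s)⁻¹ := by
        rw [← mul_inv, Real.mul_self_sqrt hR.le]
    _ ≤ (1 / (1 - 24 * (d : ℝ) * s)) ^ 2 := by
        rw [one_div, sq]
        have hip : (0:ℝ) < (1 - 24*(d:ℝ)*s)⁻¹ := by positivity
        have h1 : 1 ≤ (1 - 24*(d:ℝ)*s)⁻¹ := one_le_inv_iff₀.mpr ⟨hR, by nlinarith [hd', hs0, mul_pos hd' hs0]⟩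
        nlinarith [h1, hip]
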